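/- arXiv:1506.03054 — 6 statements merged into one kernel-verified Lean document; each statement's English description precedes it below -/
import Mathlib

section
/- Let a ≥ 0 and let f : [0,1) → ℝ be a differentiable function with f(t) > 0 for all t, satisfying f'(t) ≥ (1/(1−t))·(f(t) − a²/f(t)) for all t ∈ [0,1), and with f(0) ≥ a. Then for all t ∈ [0,1), f(t)² − a² ≥ (1−t)⁻²·(f(0)² − a²). -/
open Set

theorem stmt_0 (a : ℝ) (ha : 0 ≤ a) (f f' : ℝ → ℝ)
    (hderiv : ∀ t ∈ Ico (0:ℝ) 1, HasDerivAt f (f' t) t)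
    (hpos : ∀ t ∈ Ico (0:ℝ) 1, 0 < f t)
    (hineq : ∀ t ∈ Ico (0:ℝ) 1, f' t ≥ (1 / (1 - t)) * (f t - a ^ 2 / f t))
    (hf0 : f 0 ≥ a) :
    ∀ t ∈ Ico (0:ℝ) 1, f t ^ 2 - a ^ 2 ≥ ((1 - t)⁻¹) ^ 2 * (f 0 ^ 2 - a ^ 2) := by
  set g : ℝ → ℝ := fun t => (1 - t) ^ 2 * (f t ^ 2 - a ^ 2) with hg
  have hgderiv : ∀ t ∈ Ico (0:ℝ) 1, HasDerivAt g
      ((-2 * (1 - t)) * (f t ^ 2 - a ^ 2) + (1 - t) ^ 2 * (2 * f t * f' t)) t := by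
    intro t ht
    have h1 : HasDerivAt (fun t : ℝ => (1 - t) ^ 2) (-2 * (1 - t)) t := by
      have : HasDerivAt (fun t : ℝ => 1 - t) (-1) t := by
        simpa using (hasDerivAt_const t (1:ℝ)).fun_sub (hasDerivAt_id t)
      simpa [mul_comm, mul_assoc, mul_left_comm] using (this.fun_pow 2)
    have h2 : HasDerivAt (fun t => f t ^ 2 - a ^ 2) (2 * f t * f' t) t := by
      have := ((hderiv t ht).pow 2).sub_const (a ^ 2)
      simpa [mul_comm, mul_assoc, mul_left_comm] using this
    simpa using h1.fun_mul h2
  have hGnn : ∀ t ∈ Ico (0:ℝ) 1,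
      0 ≤ (-2 * (1 - t)) * (f t ^ 2 - a ^ 2) + (1 - t) ^ 2 * (2 * f t * f' t) := by
    intro t ht
    have ht1 : 0 < 1 - t := by linarith [ht.2]
    have hf : 0 < f t := hpos t ht
    have e1 : (1 / (1 - t)) * (f t - a ^ 2 / f t) = (f t ^ 2 - a ^ 2) / ((1 - t) * f t) := by
      field_simp
    have h := hineq t ht
    rw [e1] at h
    have h2 : f t ^ 2 - a ^ 2 ≤ f' t * ((1 - t) * f t) :=
      (div_le_iff₀ (mul_pos ht1 hf)).mp h
    nlinarith [sq_nonneg (1 - t), mul_pos ht1 hf]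
  have hmono : MonotoneOn g (Ico (0:ℝ) 1) := by
    apply monotoneOn_of_deriv_nonneg (convex_Ico 0 1)
    · exact fun t ht => ((hgderiv t ht).continuousAt.continuousWithinAt)
    · intro t ht
      rw [interior_Ico] at ht
      exact ((hgderiv t (Ioo_subset_Ico_self ht)).differentiableAt.differentiableWithinAt)
    · intro t ht
      rw [interior_Ico] at ht
      rw [(hgderiv t (Ioo_subset_Ico_self ht)).deriv]
      exact hGnn t (Ioo_subset_Ico_self ht)
  intro t ht
  have h0 : (0:ℝ) ∈ Ico (0:ℝ) 1 := by constructor <;> norm_num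
  have := hmono h0 ht ht.1
  have ht1 : 0 < 1 - t := by linarith [ht.2]
  simp only [hg] at this
  rw [ge_iff_le, ← sub_nonneg]
  have h3 : ((1 - t)⁻¹) ^ 2 * ((1 - t) ^ 2 * (f t ^ 2 - a ^ 2) - (1 - 0) ^ 2 * (f 0 ^ 2 - a ^ 2))
      = f t ^ 2 - a ^ 2 - ((1 - t)⁻¹) ^ 2 * (f 0 ^ 2 - a ^ 2) := by
    field_simp
    ring
  rw [← h3]
  exact mul_nonneg (by positivity) (by linarith)
end

section
/- Let a > 0, ε ∈ (0,1), and let f : [0,1) → ℝ be a differentiable positive function with f'(t) ≥ (1/(1−t))·(f(t) − a²/f(t)) and f(0) ≥ a/√(1−ε²). Then f(t) ≥ ε·f(0)/(1−t) for all t ∈ [0,1). -/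
open Set

theorem stmt_1 (a ε : ℝ) (ha : 0 < a) (hε : ε ∈ Ioo (0:ℝ) 1) (f f' : ℝ → ℝ)
    (hderiv : ∀ t ∈ Ico (0:ℝ) 1, HasDerivAt f (f' t) t)
    (hpos : ∀ t ∈ Ico (0:ℝ) 1, 0 < f t)
    (hineq : ∀ t ∈ Ico (0:ℝ) 1, f' t ≥ (1 / (1 - t)) * (f t - a ^ 2 / f t))
    (hf0 : f 0 ≥ a / Real.sqrt (1 - ε ^ 2)) :
    ∀ t ∈ Ico (0:ℝ) 1, f t ≥ ε * f 0 / (1 - t) := by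
  obtain ⟨hε0, hε1⟩ := hε
  set g : ℝ → ℝ := fun x => (1 - x) ^ 2 * ((f x) ^ 2 - a ^ 2) with hg
  have hG : ∀ x ∈ Ico (0:ℝ) 1, HasDerivAt g
      ((2 * (1 - x) ^ 1 * (-1)) * ((f x) ^ 2 - a ^ 2) + (1 - x) ^ 2 * (2 * f x ^ 1 * f' x)) x := by
    intro x hx
    have h1 : HasDerivAt (fun y : ℝ => (1 - y) ^ 2) (2 * (1 - x) ^ 1 * (-1)) x := by
      have : HasDerivAt (fun y : ℝ => 1 - y) (-1) x := by
        simpa using (hasDerivAt_id x).const_sub (1:ℝ)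
      simpa using this.fun_pow 2
    have h2 : HasDerivAt (fun y => (f y) ^ 2 - a ^ 2) (2 * f x ^ 1 * f' x) x := by
      simpa using ((hderiv x hx).pow 2).sub_const (a ^ 2)
    exact h1.mul h2
  have hGnn : ∀ x ∈ Ico (0:ℝ) 1,
      0 ≤ (2 * (1 - x) ^ 1 * (-1)) * ((f x) ^ 2 - a ^ 2) + (1 - x) ^ 2 * (2 * f x ^ 1 * f' x) := by
    intro x hx
    have h1x : 0 < 1 - x := by linarith [hx.2]
    have hfx := hpos x hx
    have hi := hineq x hx
    have key : (1 - x) * f x * f' x ≥ (f x) ^ 2 - a ^ 2 := by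
      have := mul_le_mul_of_nonneg_left hi (le_of_lt (mul_pos h1x hfx))
      have hrw : (1 - x) * f x * ((1 / (1 - x)) * (f x - a ^ 2 / f x)) = (f x) ^ 2 - a ^ 2 := by
        field_simp
      nlinarith [this, hrw]
    nlinarith [key, h1x]
  intro t ht
  obtain ⟨ht0, ht1⟩ := ht
  have h1t : 0 < 1 - t := by linarith
  -- monotonicity of g on [0,t]
  have hsub : Icc (0:ℝ) t ⊆ Ico (0:ℝ) 1 := fun x hx => ⟨hx.1, lt_of_le_of_lt hx.2 ht1⟩
  have hmono : MonotoneOn g (Icc (0:ℝ) t) := by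
    apply monotoneOn_of_deriv_nonneg (convex_Icc 0 t)
    · exact fun x hx => (hG x (hsub hx)).continuousAt.continuousWithinAt
    · intro x hx
      have hx' : x ∈ Ico (0:ℝ) 1 := hsub (interior_subset hx)
      exact ((hG x hx').differentiableAt).differentiableWithinAt
    · intro x hx
      have hx' : x ∈ Ico (0:ℝ) 1 := hsub (interior_subset hx)
      rw [(hG x hx').deriv]
      exact hGnn x hx'
  have hkey : g 0 ≤ g t :=
    hmono (left_mem_Icc.2 ht0) (right_mem_Icc.2 ht0) ht0
  have hg0 : g 0 = (f 0) ^ 2 - a ^ 2 := by simp [hg]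
  -- f 0 bound
  have hε2 : (0:ℝ) < 1 - ε ^ 2 := by nlinarith
  have hs : 0 < Real.sqrt (1 - ε ^ 2) := Real.sqrt_pos.2 hε2
  have hf0' : a ≤ f 0 * Real.sqrt (1 - ε ^ 2) := by
    rw [ge_iff_le, div_le_iff₀ hs] at hf0; exact hf0
  have hsq : Real.sqrt (1 - ε ^ 2) ^ 2 = 1 - ε ^ 2 := Real.sq_sqrt hε2.le
  have hf0pos : 0 < f 0 := hpos 0 ⟨le_refl 0, by norm_num⟩
  have haux : ε ^ 2 * (f 0) ^ 2 ≤ (f 0) ^ 2 - a ^ 2 := by nlinarith [hf0', hsq, hf0pos]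
  have hft : 0 < f t := hpos t ⟨ht0, ht1⟩
  have hx : 0 < ε * f 0 / (1 - t) := by positivity
  have hsq2 : (ε * f 0 / (1 - t)) ^ 2 ≤ (f t) ^ 2 := by
    rw [div_pow]
    rw [div_le_iff₀ (by positivity)]
    have : (f 0) ^ 2 - a ^ 2 ≤ (1 - t) ^ 2 * ((f t) ^ 2 - a ^ 2) := by
      rw [← hg0]; exact hkey
    nlinarith [this, haux, sq_nonneg a]
  nlinarith [hsq2, hx, hft]
end

section
/- Let a > 0, ε ∈ (0,1), and let f : [0,1) → ℝ be differentiable and positive with f'(t) ≥ (1/(1−t))(f(t) − a²/f(t)), f'(t) ≤ f(t)/(1−t), and f(0) ≥ a/√(1−ε²). Then for all t ∈ [0,1), ε·f(0) ≤ (1−t)·f(t) ≤ f(0). -/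
open Set

theorem stmt_4 (a ε : ℝ) (ha : 0 < a) (hε : ε ∈ Ioo (0:ℝ) 1) (f f' : ℝ → ℝ)
    (hderiv : ∀ t ∈ Ico (0:ℝ) 1, HasDerivAt f (f' t) t)
    (hpos : ∀ t ∈ Ico (0:ℝ) 1, 0 < f t)
    (hlow : ∀ t ∈ Ico (0:ℝ) 1, f' t ≥ (1 / (1 - t)) * (f t - a ^ 2 / f t))
    (hup : ∀ t ∈ Ico (0:ℝ) 1, f' t ≤ f t / (1 - t))
    (hf0 : f 0 ≥ a / Real.sqrt (1 - ε ^ 2)) :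
    ∀ t ∈ Ico (0:ℝ) 1, ε * f 0 ≤ (1 - t) * f t ∧ (1 - t) * f t ≤ f 0 := by
  obtain ⟨hε0, hε1⟩ := hε
  set h : ℝ → ℝ := fun t => (1 - t) * f t with hh
  have hderivh : ∀ t ∈ Ico (0:ℝ) 1,
      HasDerivAt h ((-1) * f t + (1 - t) * f' t) t := by
    intro t ht
    exact ((hasDerivAt_id t).const_sub 1).mul (hderiv t ht)
  have hconth : ContinuousOn h (Ico 0 1) := fun t ht =>
    ((hderivh t ht).continuousAt).continuousWithinAt
  have hint : interior (Ico (0:ℝ) 1) = Ioo 0 1 := interior_Ico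
  -- upper bound : h antitone
  have hanti : AntitoneOn h (Ico 0 1) := by
    apply antitoneOn_of_deriv_nonpos (convex_Ico 0 1) hconth
    · intro x hx
      rw [hint] at hx
      exact ((hderivh x ⟨hx.1.le, hx.2⟩).differentiableAt).differentiableWithinAt
    intro x hx
    rw [hint] at hx
    have hx' : x ∈ Ico (0:ℝ) 1 := ⟨le_of_lt hx.1, hx.2⟩
    rw [((hderivh x hx').deriv)]
    have h1x : 0 < 1 - x := by linarith [hx.2]
    have : (1 - x) * f' x ≤ f x := by
      have h5 := hup x hx'
      rw [le_div_iff₀ h1x] at h5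
      nlinarith [h5]
    linarith
  -- lower bound : φ monotone
  set φ : ℝ → ℝ := fun t => ((1 - t) * f t) ^ 2 - a ^ 2 * (1 - t) ^ 2 with hφ
  have hderivφ : ∀ t ∈ Ico (0:ℝ) 1,
      HasDerivAt φ (2 * ((1 - t) * f t) ^ 1 * ((-1) * f t + (1 - t) * f' t)
        - a ^ 2 * (2 * (1 - t) ^ 1 * (-1))) t := by
    intro t ht
    exact ((hderivh t ht).pow 2).sub
      ((((hasDerivAt_id t).const_sub 1).pow 2).const_mul (a ^ 2))
  have hmono : MonotoneOn φ (Ico 0 1) := by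
    apply monotoneOn_of_deriv_nonneg (convex_Ico 0 1)
      (fun t ht => ((hderivφ t ht).continuousAt).continuousWithinAt)
    · intro x hx
      rw [hint] at hx
      exact ((hderivφ x ⟨hx.1.le, hx.2⟩).differentiableAt).differentiableWithinAt
    intro x hx
    rw [hint] at hx
    have hx' : x ∈ Ico (0:ℝ) 1 := ⟨le_of_lt hx.1, hx.2⟩
    rw [((hderivφ x hx').deriv)]
    have h1x : 0 < 1 - x := by linarith [hx.2]
    have hfx := hpos x hx'
    have hl := hlow x hx'
    -- (1-x) f' x ≥ f x - a^2 / f x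
    have h2 : (1 - x) * f' x ≥ f x - a ^ 2 / f x := by
      have := hl
      rw [ge_iff_le, one_div, mul_comm, ← div_eq_mul_inv, div_le_iff₀ h1x] at this
      nlinarith
    have h3 : f x * ((1 - x) * f' x - f x) ≥ -a ^ 2 := by
      have h4 : f x * (f x - a ^ 2 / f x - f x) = -a ^ 2 := by
        field_simp
        ring
      nlinarith
    ring_nf
    nlinarith [h3, h1x]
  intro t ht
  have h0 : (0:ℝ) ∈ Ico (0:ℝ) 1 := ⟨le_refl 0, by norm_num⟩
  have hf0pos := hpos 0 h0
  have hte : 0 ≤ t := ht.1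
  constructor
  · -- lower bound
    have hφle : φ 0 ≤ φ t := hmono h0 ht hte
    have hsq : 0 < 1 - ε ^ 2 := by nlinarith
    have hsqrt : Real.sqrt (1 - ε ^ 2) > 0 := Real.sqrt_pos.mpr hsq
    have ha2 : a ^ 2 ≤ (1 - ε ^ 2) * f 0 ^ 2 := by
      have : a ≤ f 0 * Real.sqrt (1 - ε ^ 2) := by
        rw [ge_iff_le, div_le_iff₀ hsqrt] at hf0
        exact hf0
      have hs : Real.sqrt (1 - ε ^ 2) ^ 2 = 1 - ε ^ 2 := Real.sq_sqrt hsq.le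
      nlinarith [hsqrt.le, hf0pos.le]
    have hφ0 : φ 0 = f 0 ^ 2 - a ^ 2 := by simp [hφ]
    have hφt : φ t = ((1 - t) * f t) ^ 2 - a ^ 2 * (1 - t) ^ 2 := rfl
    have hhtpos : 0 < (1 - t) * f t := by
      have := hpos t ht
      have : 0 < 1 - t := by linarith [ht.2]
      positivity
    have hεf0 : 0 < ε * f 0 := by positivity
    nlinarith [hφle, hhtpos, hεf0, sq_nonneg (1 - t)]
  · have := hanti h0 ht hte
    simpa [hh] using this
end

section
/- Let a > 0, ε ∈ (0,1), C > 0, and let f : [0,1) → ℝ be differentiable and positive with f'(t) ≥ (1/(1−t))(f(t) − a²/f(t)) and f(0) ≥ a/√(1−ε²). Suppose F : [0,1) → ℝ satisfies 0 ≤ F(t) ≤ C/((1−t)·f(t)) for all t. Then F(t) ≤ C·√(1−ε²)/(a·ε) for all t ∈ [0,1), i.e. F is uniformly bounded. -/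
open Set

theorem stmt_8 (a ε C : ℝ) (ha : 0 < a) (hε : ε ∈ Ioo (0:ℝ) 1) (hC : 0 < C)
    (f f' F : ℝ → ℝ)
    (hderiv : ∀ t ∈ Ico (0:ℝ) 1, HasDerivAt f (f' t) t)
    (hpos : ∀ t ∈ Ico (0:ℝ) 1, 0 < f t)
    (hineq : ∀ t ∈ Ico (0:ℝ) 1, f' t ≥ (1 / (1 - t)) * (f t - a ^ 2 / f t))
    (hf0 : f 0 ≥ a / Real.sqrt (1 - ε ^ 2))
    (hF : ∀ t ∈ Ico (0:ℝ) 1, 0 ≤ F t ∧ F t ≤ C / ((1 - t) * f t)) :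
    ∀ t ∈ Ico (0:ℝ) 1, F t ≤ C * Real.sqrt (1 - ε ^ 2) / (a * ε) := by
  obtain ⟨hε0, hε1⟩ := hε
  have h1ε : (0:ℝ) < 1 - ε ^ 2 := by nlinarith
  set s := Real.sqrt (1 - ε ^ 2) with hs_def
  have hs : 0 < s := Real.sqrt_pos.2 h1ε
  have hs2 : s ^ 2 = 1 - ε ^ 2 := Real.sq_sqrt h1ε.le
  intro t ht
  obtain ⟨ht0, ht1⟩ := ht
  set G : ℝ → ℝ := fun u => (1 - u) ^ 2 * ((f u) ^ 2 - a ^ 2) with hG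
  have hGderiv : ∀ u ∈ Ico (0:ℝ) 1, HasDerivAt G
      (-2 * (1 - u) * ((f u) ^ 2 - a ^ 2) + (1 - u) ^ 2 * (2 * f u * f' u)) u := by
    intro u hu
    have h1 : HasDerivAt (fun u : ℝ => (1 - u) ^ 2) (-2 * (1 - u)) u := by
      have := ((hasDerivAt_id u).const_sub 1).fun_pow 2
      refine this.congr_deriv ?_
      simp [id]
    have h2 : HasDerivAt (fun u => (f u) ^ 2 - a ^ 2) (2 * f u * f' u) u := by
      have := ((hderiv u hu).fun_pow 2).sub_const (a ^ 2)
      refine this.congr_deriv ?_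
      ring
    exact h1.mul h2
  have hGmono : G 0 ≤ G t := by
    rcases eq_or_lt_of_le ht0 with h | h
    · rw [← h]
    · have hsub : Icc (0:ℝ) t ⊆ Ico (0:ℝ) 1 := fun x hx => ⟨hx.1, lt_of_le_of_lt hx.2 ht1⟩
      have hsub' : Ioo (0:ℝ) t ⊆ Ico (0:ℝ) 1 := fun x hx => ⟨hx.1.le, hx.2.trans ht1⟩
      have hcont : ContinuousOn G (Icc 0 t) := fun x hx =>
        ((hGderiv x (hsub hx)).continuousAt).continuousWithinAt
      have hdiff : DifferentiableOn ℝ G (Ioo 0 t) := fun x hx =>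
        ((hGderiv x (hsub' hx)).differentiableAt).differentiableWithinAt
      have hmono : MonotoneOn G (Icc 0 t) := by
        apply monotoneOn_of_deriv_nonneg (convex_Icc 0 t) hcont
        · rw [interior_Icc]; exact hdiff
        · intro x hx
          rw [interior_Icc] at hx
          have hxI := hsub' hx
          rw [(hGderiv x hxI).deriv]
          have hfx := hpos x hxI
          have h1x : 0 < 1 - x := by linarith [hxI.2]
          have hkey := hineq x hxI
          have : (1 - x) * f x * f' x ≥ f x ^ 2 - a ^ 2 := by
            have := mul_le_mul_of_nonneg_left hkey (le_of_lt (mul_pos h1x hfx))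
            calc f x ^ 2 - a ^ 2 = (1 - x) * f x * ((1 / (1 - x)) * (f x - a ^ 2 / f x)) := by
                  field_simp
              _ ≤ (1 - x) * f x * f' x := this
          nlinarith [sq_nonneg (1 - x)]
      exact hmono (left_mem_Icc.2 h.le) (right_mem_Icc.2 h.le) h.le
  have hf0sq : (f 0) ^ 2 ≥ a ^ 2 / (1 - ε ^ 2) := by
    have h0 : (0:ℝ) ≤ a / s := by positivity
    have := mul_self_le_mul_self h0 hf0
    have heq : (a / s) * (a / s) = a ^ 2 / (1 - ε ^ 2) := by
      rw [← hs2]; field_simp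
    nlinarith
  have hG0 : G 0 = (f 0) ^ 2 - a ^ 2 := by simp [hG]
  have hft := hpos t ⟨ht0, ht1⟩
  have h1t : 0 < 1 - t := by linarith
  have hlow : a * ε / s ≤ (1 - t) * f t := by
    have hsq : (a * ε / s) ^ 2 ≤ ((1 - t) * f t) ^ 2 := by
      have heq : (a * ε / s) ^ 2 = a ^ 2 / (1 - ε ^ 2) - a ^ 2 := by
        rw [div_pow, hs2]; field_simp; ring
      have hGt : G t = (1 - t) ^ 2 * ((f t) ^ 2 - a ^ 2) := rfl
      nlinarith [sq_nonneg (1 - t), mul_pos h1t hft]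
    have hpos1 : (0:ℝ) ≤ a * ε / s := by positivity
    nlinarith [mul_pos h1t hft]
  have hFt := hF t ⟨ht0, ht1⟩
  have hstep : C / ((1 - t) * f t) ≤ C / (a * ε / s) :=
    div_le_div_of_nonneg_left hC.le (by positivity) hlow
  have heq2 : C / (a * ε / s) = C * s / (a * ε) := by
    field_simp
  linarith [hFt.2, hstep, heq2 ▸ hstep]
end

section
/- Let a ≥ 0 and f : [0,1) → ℝ be differentiable and positive with f(0) > a and f'(t) ≥ (1/(1−t))·(f(t) − a²/f(t)). Then f(t) → ∞ as t → 1⁻. -/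
open Set Filter

theorem stmt_10 (a : ℝ) (ha : 0 ≤ a) (f f' : ℝ → ℝ)
    (hderiv : ∀ t ∈ Ico (0:ℝ) 1, HasDerivAt f (f' t) t)
    (hpos : ∀ t ∈ Ico (0:ℝ) 1, 0 < f t)
    (hineq : ∀ t ∈ Ico (0:ℝ) 1, f' t ≥ (1 / (1 - t)) * (f t - a ^ 2 / f t))
    (hf0 : f 0 > a) :
    Tendsto f (nhdsWithin 1 (Iio 1)) atTop := by
  have hf0pos : 0 < f 0 := lt_of_le_of_lt ha hf0
  have hca : 0 < f 0 ^ 2 - a ^ 2 := by nlinarith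
  set c : ℝ := Real.sqrt (f 0 ^ 2 - a ^ 2) with hc
  have hcpos : 0 < c := Real.sqrt_pos.mpr hca
  set g : ℝ → ℝ := fun t => (1 - t) ^ 2 * ((f t) ^ 2 - a ^ 2) with hg
  set g' : ℝ → ℝ := fun t =>
    (-2 * (1 - t)) * ((f t) ^ 2 - a ^ 2) + (1 - t) ^ 2 * (2 * f t * f' t) with hg'
  have hgd : ∀ t ∈ Ico (0:ℝ) 1, HasDerivAt g (g' t) t := by
    intro t ht
    have h1 : HasDerivAt (fun s : ℝ => (1 - s) ^ 2) (-2 * (1 - t)) t := by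
      have h0 : HasDerivAt (fun s : ℝ => 1 - s) (-1) t := by
        simpa using (hasDerivAt_id t).const_sub 1
      have := h0.pow 2
      refine this.congr_deriv ?_
      ring
    have h2 : HasDerivAt (fun s : ℝ => (f s) ^ 2 - a ^ 2) (2 * f t * f' t) t := by
      have := ((hderiv t ht).pow 2).sub_const (a ^ 2)
      refine this.congr_deriv ?_
      ring
    exact h1.mul h2
  have hgd' : ∀ x ∈ Ico (0:ℝ) 1, 0 ≤ g' x := by
    intro x hx
    have hfx : 0 < f x := hpos x hx
    have h1x : 0 < 1 - x := by simp [sub_pos]; exact hx.2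
    have hi := hineq x hx
    have hfd : f x * (a ^ 2 / f x) = a ^ 2 := by field_simp
    have h2 : f x - a ^ 2 / f x ≤ (1 - x) * f' x := by
      rw [ge_iff_le, one_div, inv_mul_eq_div, div_le_iff₀ h1x] at hi
      linarith [hi]
    have h3 := mul_le_mul_of_nonneg_left h2 (by positivity : (0:ℝ) ≤ 2 * (1 - x) * f x)
    simp only [g']
    nlinarith [h3, hfd]
  have hmono : ∀ t ∈ Ico (0:ℝ) 1, g 0 ≤ g t := by
    intro t ht
    rcases eq_or_lt_of_le ht.1 with h0 | h0
    · rw [← h0]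
    · have hsub : Icc (0:ℝ) t ⊆ Ico (0:ℝ) 1 := fun x hx =>
        ⟨hx.1, lt_of_le_of_lt hx.2 ht.2⟩
      have hcont : ContinuousOn g (Icc 0 t) := fun x hx =>
        ((hgd x (hsub hx)).continuousAt).continuousWithinAt
      obtain ⟨y, hy, hyeq⟩ := exists_hasDerivAt_eq_slope g g' h0 hcont
        (fun x hx => hgd x (hsub ⟨le_of_lt hx.1, le_of_lt hx.2⟩))
      have h0y : 0 ≤ g' y := hgd' y (hsub ⟨le_of_lt hy.1, le_of_lt hy.2⟩)
      rw [hyeq] at h0y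
      have := mul_nonneg h0y (le_of_lt (sub_pos.mpr h0))
      rw [div_mul_cancel₀] at this
      · linarith
      · exact ne_of_gt (sub_pos.mpr h0)
  have hbound : ∀ t ∈ Ico (0:ℝ) 1, c / (1 - t) ≤ f t := by
    intro t ht
    have hft : 0 < f t := hpos t ht
    have h1t : 0 < 1 - t := by simp [sub_pos]; exact ht.2
    have hG := hmono t ht
    have hg0 : g 0 = f 0 ^ 2 - a ^ 2 := by simp [g]
    rw [hg0] at hG
    have hsq : c ^ 2 ≤ ((1 - t) * f t) ^ 2 := by
      have : c ^ 2 = f 0 ^ 2 - a ^ 2 := Real.sq_sqrt (le_of_lt hca)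
      rw [this]
      simp only [g] at hG
      nlinarith [sq_nonneg a, sq_nonneg (1 - t)]
    have hcle : c ≤ (1 - t) * f t := by
      have hnn : 0 ≤ (1 - t) * f t := by positivity
      nlinarith [hsq]
    rw [div_le_iff₀ h1t]
    linarith [hcle]
  have hlim : Tendsto (fun t => c / (1 - t)) (nhdsWithin 1 (Iio 1)) atTop := by
    simp only [div_eq_mul_inv]
    apply Tendsto.const_mul_atTop hcpos
    have h1 : Tendsto (fun t : ℝ => 1 - t) (nhdsWithin 1 (Iio 1)) (nhdsWithin 0 (Ioi 0)) := by
      apply tendsto_nhdsWithin_of_tendsto_nhds_of_eventually_within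
      · have hct : Continuous (fun t : ℝ => 1 - t) := continuous_const.sub continuous_id
        have : Tendsto (fun t : ℝ => 1 - t) (nhds 1) (nhds 0) := by
          simpa using hct.tendsto (1:ℝ)
        exact this.mono_left nhdsWithin_le_nhds
      · filter_upwards [self_mem_nhdsWithin] with x hx
        simpa [sub_pos] using hx
    exact tendsto_inv_nhdsGT_zero.comp h1
  apply tendsto_atTop_mono' _ _ hlim
  have hmem : Ico (0:ℝ) 1 ∈ nhdsWithin 1 (Iio 1) := by
    apply mem_nhdsWithin.mpr
    exact ⟨Ioi (0:ℝ), isOpen_Ioi, by norm_num, fun x hx => ⟨le_of_lt hx.1, hx.2⟩⟩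
  filter_upwards [hmem] with t ht
  exact hbound t ht
end

section
/- Let a > 0 and suppose f : [0,1) → ℝ is differentiable, positive, satisfies f'(t) ≥ (1/(1−t))(f(t) − a²/f(t)) and f'(t)·(1−t) = f(t) − R(t) for some function R with 0 ≤ R(t) ≤ a²/f(t) (i.e. the scalar curvature bound R ≤ a²/f). Then the function h(t) = (1−t)f(t) satisfies h'(t) = −R(t), hence h is nonincreasing, and h(t) ≥ √(f(0)² − a²) for all t ∈ [0,1) when f(0) ≥ a; in particular lim_{t→1⁻} h(t) exists and is ≥ √(f(0)² − a²). -/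
open Set Filter

theorem stmt_13 (a : ℝ) (ha : 0 < a) (f f' R : ℝ → ℝ)
    (hderiv : ∀ t ∈ Ico (0:ℝ) 1, HasDerivAt f (f' t) t)
    (hpos : ∀ t ∈ Ico (0:ℝ) 1, 0 < f t)
    (hineq : ∀ t ∈ Ico (0:ℝ) 1, f' t ≥ (1 / (1 - t)) * (f t - a ^ 2 / f t))
    (hR : ∀ t ∈ Ico (0:ℝ) 1, f' t * (1 - t) = f t - R t)
    (hRnonneg : ∀ t ∈ Ico (0:ℝ) 1, 0 ≤ R t)
    (hRbound : ∀ t ∈ Ico (0:ℝ) 1, R t ≤ a ^ 2 / f t)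
    (hf0 : f 0 ≥ a) :
    (∀ t ∈ Ico (0:ℝ) 1, HasDerivAt (fun s => (1 - s) * f s) (-R t) t) ∧
    AntitoneOn (fun t => (1 - t) * f t) (Ico (0:ℝ) 1) ∧
    (∀ t ∈ Ico (0:ℝ) 1, (1 - t) * f t ≥ Real.sqrt (f 0 ^ 2 - a ^ 2)) ∧
    ∃ L : ℝ, Tendsto (fun t => (1 - t) * f t) (nhdsWithin 1 (Iio 1)) (nhds L) ∧
      L ≥ Real.sqrt (f 0 ^ 2 - a ^ 2) := by
  set h : ℝ → ℝ := fun t => (1 - t) * f t with hh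
  -- derivative of h
  have hd : ∀ t ∈ Ico (0:ℝ) 1, HasDerivAt h (-R t) t := by
    intro t ht
    have h1 : HasDerivAt h (-1 * f t + (1 - id t) * f' t) t := ((hasDerivAt_id t).const_sub 1).mul (hderiv t ht)
    convert h1 using 1
    simp only [id_eq]
    linear_combination -hR t ht
  have hanti : AntitoneOn h (Ico (0:ℝ) 1) := by
    have hcont : ContinuousOn h (Ico (0:ℝ) 1) := fun t ht =>
      (hd t ht).continuousAt.continuousWithinAt
    apply antitoneOn_of_deriv_nonpos (convex_Ico 0 1) hcont
    · intro t ht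
      rw [interior_Ico] at ht
      exact (hd t ⟨le_of_lt ht.1, ht.2⟩).differentiableAt.differentiableWithinAt
    · intro t ht
      rw [interior_Ico] at ht
      have ht' : t ∈ Ico (0:ℝ) 1 := ⟨le_of_lt ht.1, ht.2⟩
      rw [(hd t ht').deriv]
      linarith [hRnonneg t ht']
  have hlb : ∀ t ∈ Ico (0:ℝ) 1, h t ≥ Real.sqrt (f 0 ^ 2 - a ^ 2) := by
    -- g(t) = h(t)^2 - a^2*(1-t)^2 is monotone nondecreasing
    set g : ℝ → ℝ := fun t => h t ^ 2 - a ^ 2 * (1 - t) ^ 2 with hg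
    have hgd : ∀ t ∈ Ico (0:ℝ) 1, HasDerivAt g (2 * (1 - t) * (a ^ 2 - f t * R t)) t := by
      intro t ht
      have h1 : HasDerivAt g (↑2 * h t ^ (2 - 1) * -R t - a ^ 2 * (↑2 * (1 - id t) ^ (2 - 1) * -1)) t := ((hd t ht).pow 2).sub
        ((((hasDerivAt_id t).const_sub 1).pow 2).const_mul (a ^ 2))
      convert h1 using 1
      simp only [hh, id_eq]; ring
    have hgmono : MonotoneOn g (Ico (0:ℝ) 1) := by
      have hcont : ContinuousOn g (Ico (0:ℝ) 1) := fun t ht =>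
        (hgd t ht).continuousAt.continuousWithinAt
      apply monotoneOn_of_deriv_nonneg (convex_Ico 0 1) hcont
      · intro t ht
        rw [interior_Ico] at ht
        exact (hgd t ⟨le_of_lt ht.1, ht.2⟩).differentiableAt.differentiableWithinAt
      · intro t ht
        rw [interior_Ico] at ht
        have ht' : t ∈ Ico (0:ℝ) 1 := ⟨le_of_lt ht.1, ht.2⟩
        rw [(hgd t ht').deriv]
        have hfR : f t * R t ≤ a ^ 2 := by
          have := hRbound t ht'
          have hf := hpos t ht'
          calc f t * R t ≤ f t * (a ^ 2 / f t) := by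
                exact mul_le_mul_of_nonneg_left this hf.le
            _ = a ^ 2 := by field_simp
        have : (0:ℝ) ≤ 1 - t := by linarith [ht.2.le]
        nlinarith
    intro t ht
    have h0 : (0:ℝ) ∈ Ico (0:ℝ) 1 := ⟨le_refl _, by norm_num⟩
    have := hgmono h0 ht ht.1
    have hsq : f 0 ^ 2 - a ^ 2 ≤ h t ^ 2 := by
      simp only [hg, hh] at this ⊢
      nlinarith [sq_nonneg (1 - t)]
    have hht : 0 ≤ h t := by
      have h2 := hpos t ht
      have h3 : (0:ℝ) ≤ 1 - t := by linarith [ht.2.le]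
      positivity
    calc Real.sqrt (f 0 ^ 2 - a ^ 2) ≤ Real.sqrt (h t ^ 2) := Real.sqrt_le_sqrt hsq
      _ = h t := by rw [Real.sqrt_sq hht]
  refine ⟨hd, hanti, hlb, ?_⟩
  have hne : (Ioo (0:ℝ) 1).Nonempty := ⟨1/2, by norm_num⟩
  have hAf : AntitoneOn h (Ioo (0:ℝ) 1) := hanti.mono Ioo_subset_Ico_self
  have hbdd : BddBelow (h '' Ioo (0:ℝ) 1) := by
    refine ⟨Real.sqrt (f 0 ^ 2 - a ^ 2), ?_⟩
    rintro x ⟨t, ht, rfl⟩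
    exact hlb t (Ioo_subset_Ico_self ht)
  refine ⟨sInf (h '' Ioo (0:ℝ) 1),
    AntitoneOn.tendsto_nhdsWithin_Ioo_left hne hAf hbdd, ?_⟩
  refine le_csInf (hne.image _) ?_
  rintro x ⟨t, ht, rfl⟩
  exact hlb t (Ioo_subset_Ico_self ht)
end
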